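/- Let W ⊆ ℝ^m × ℝ^n be open and let G : W → ℝ be such that for each x the partial map v ↦ G(x,v) is differentiable, and the vertical differential (x,v) ↦ D_v G(x,v) (a linear map ℝ^n → ℝ) is continuous on W. Let K ⊆ W be compact and let e ∈ ℝ^n satisfy D_v G(x,v)(e) > 0 for every (x,v) ∈ K. Then there exist δ > 0 and u₀ > 0 such that for every (x,v) ∈ K and every u ∈ [0,u₀] one has (x, v + u·e) ∈ W and G(x, v + u·e) ≥ G(x,v) + δ·u. -/

import Mathlib

/-- **Uniform vertical-increase lemma.** Let `W ⊆ ℝ^m × ℝ^n` be open and `G : W → ℝ`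
be such that each partial map `v ↦ G (x, v)` is differentiable with vertical differential
`D_v G` continuous on `W`. If `K ⊆ W` is compact and `e ∈ ℝ^n` satisfies
`D_v G (x, v) e > 0` on `K`, then there are `δ > 0` and `u₀ > 0` such that for every
`(x, v) ∈ K` and `u ∈ [0, u₀]` one has `(x, v + u • e) ∈ W` and
`G (x, v + u • e) ≥ G (x, v) + δ * u`. -/
theorem uniform_vertical_increase
    {m n : ℕ}
    (W : Set (EuclideanSpace ℝ (Fin m) × EuclideanSpace ℝ (Fin n)))
    (hW : IsOpen W)
    (G : EuclideanSpace ℝ (Fin m) → EuclideanSpace ℝ (Fin n) → ℝ)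
    (DvG : EuclideanSpace ℝ (Fin m) → EuclideanSpace ℝ (Fin n) →
      (EuclideanSpace ℝ (Fin n) →L[ℝ] ℝ))
    (hG_diff : ∀ p ∈ W, HasFDerivAt (fun v => G p.1 v) (DvG p.1 p.2) p.2)
    (hDvG_cont : ContinuousOn (fun p => DvG p.1 p.2) W)
    (K : Set (EuclideanSpace ℝ (Fin m) × EuclideanSpace ℝ (Fin n)))
    (hK : IsCompact K) (hKW : K ⊆ W)
    (e : EuclideanSpace ℝ (Fin n))
    (he : ∀ p ∈ K, 0 < DvG p.1 p.2 e) :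
    ∃ δ > (0 : ℝ), ∃ u₀ > (0 : ℝ), ∀ p ∈ K, ∀ u : ℝ, 0 ≤ u → u ≤ u₀ →
      (p.1, p.2 + u • e) ∈ W ∧ G p.1 p.2 + δ * u ≤ G p.1 (p.2 + u • e) := by
  rcases K.eq_empty_or_nonempty with hKe | hKne
  · subst hKe
    exact ⟨1, one_pos, 1, one_pos, fun p hp => absurd hp (Set.notMem_empty p)⟩
  -- continuous function q ↦ DvG q.1 q.2 e on W
  have hf : ContinuousOn (fun q => DvG q.1 q.2 e) W := by
    exact (ContinuousLinearMap.apply ℝ ℝ e).continuous.comp_continuousOn hDvG_cont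
  -- minimum on K
  obtain ⟨q₀, hq₀K, hq₀min⟩ := hK.exists_isMinOn hKne (hf.mono hKW)
  set c : ℝ := DvG q₀.1 q₀.2 e with hc_def
  have hc : 0 < c := he q₀ hq₀K
  set δ : ℝ := c / 2 with hδ_def
  have hδ : 0 < δ := by positivity
  -- open set where derivative exceeds δ
  set U : Set _ := W ∩ (fun q => DvG q.1 q.2 e) ⁻¹' Set.Ioi δ with hU_def
  have hUopen : IsOpen U := hf.isOpen_inter_preimage hW isOpen_Ioi
  have hKU : K ⊆ U := fun p hp => ⟨hKW hp, by
    have := hq₀min hp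
    simp only [Set.mem_preimage, Set.mem_Ioi]
    have : c ≤ DvG p.1 p.2 e := this
    linarith⟩
  obtain ⟨r, hr, hthick⟩ := hK.exists_thickening_subset_open hUopen hKU
  refine ⟨δ, hδ, r / (‖e‖ + 1), by positivity, fun p hp u hu0 hu1 => ?_⟩
  have hnorm : ∀ t : ℝ, 0 ≤ t → t ≤ r / (‖e‖ + 1) → (p.1, p.2 + t • e) ∈ U := by
    intro t ht0 ht1
    apply hthick
    rw [Metric.mem_thickening_iff]
    refine ⟨p, hp, ?_⟩
    have : dist (p.1, p.2 + t • e) p = dist (p.2 + t • e) p.2 := by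
      rw [Prod.dist_eq]; simp
    rw [this, dist_eq_norm, add_sub_cancel_left, norm_smul, Real.norm_eq_abs, abs_of_nonneg ht0]
    calc t * ‖e‖ ≤ (r / (‖e‖ + 1)) * ‖e‖ := by
          apply mul_le_mul_of_nonneg_right ht1 (norm_nonneg e)
      _ < r := by
          rw [div_mul_eq_mul_div, div_lt_iff₀ (by positivity)]
          nlinarith [norm_nonneg e]
  have hmemU : ∀ t ∈ Set.Icc (0:ℝ) u, (p.1, p.2 + t • e) ∈ U :=
    fun t ht => hnorm t ht.1 (le_trans ht.2 hu1)
  -- derivative of g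
  set g : ℝ → ℝ := fun t => G p.1 (p.2 + t • e) with hg_def
  have hg : ∀ t ∈ Set.Icc (0:ℝ) u, HasDerivAt g (DvG p.1 (p.2 + t • e) e) t := by
    intro t ht
    have h1 : HasDerivAt (fun t : ℝ => p.2 + t • e) e t := by
      simpa using ((hasDerivAt_id t).smul_const e).const_add p.2
    have h2 := hG_diff (p.1, p.2 + t • e) (hmemU t ht).1
    exact h2.comp_hasDerivAt t h1
  have hcont : ContinuousOn g (Set.Icc 0 u) :=
    fun t ht => ((hg t ht).continuousAt).continuousWithinAt
  have hderiv : ∀ t ∈ interior (Set.Icc (0:ℝ) u), δ ≤ deriv g t := by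
    intro t ht
    rw [interior_Icc] at ht
    have ht' : t ∈ Set.Icc (0:ℝ) u := ⟨le_of_lt ht.1, le_of_lt ht.2⟩
    rw [(hg t ht').deriv]
    exact le_of_lt (hmemU t ht').2
  have hmvt := (convex_Icc (0:ℝ) u).mul_sub_le_image_sub_of_le_deriv hcont
    (fun t ht => ((hg t (interior_subset ht)).differentiableAt).differentiableWithinAt)
    hderiv 0 (Set.left_mem_Icc.2 hu0) u (Set.right_mem_Icc.2 hu0) hu0
  have hg0 : g 0 = G p.1 p.2 := by simp [hg_def]
  have hWmem : (p.1, p.2 + u • e) ∈ W := (hmemU u (Set.right_mem_Icc.2 hu0)).1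
  refine ⟨hWmem, ?_⟩
  have : δ * (u - 0) ≤ g u - g 0 := hmvt
  rw [hg0] at this
  simpa [hg_def] using by linarith [this]
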